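/- Let G be the metacyclic group ⟨x, y | x^p = y^m = 1, x^{-1} y x = y^r⟩ where p is the smallest prime divisor of |G| = pm and gcd(p(r-1), m) = 1. Then the sequence S_0 = x^{[p-1]} · y^{[m-1]} (the element x repeated p-1 times together with y repeated m-1 times) is product-one free; consequently d(G) ≥ m + p - 2. -/

import Mathlib

/-- The set of products of a sequence (multiset) `S` over all orderings. -/
def piSet {G : Type*} [Group G] (S : Multiset G) : Set G :=
  {g | ∃ l : List G, (l : Multiset G) = S ∧ l.prod = g}

/-- The set `Π(S)` of all products of nonempty subsequences of `S`. -/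
def subProds {G : Type*} [Group G] (S : Multiset G) : Set G :=
  {g | ∃ T : Multiset G, T ≤ S ∧ T ≠ 0 ∧ g ∈ piSet T}

/-- The small Davenport constant: the maximal length of a product-one free sequence. -/
noncomputable def dG (G : Type*) [Group G] : ℕ :=
  sSup {n | ∃ S : Multiset G, Multiset.card S = n ∧ (1 : G) ∉ subProds S}

/-- Pigeonhole: a sequence of length at least `|G|` has a nonempty subsequence with product 1. -/
lemma aux_long_seq {G : Type*} [Group G] [Fintype G] (S : Multiset G)
    (h : Fintype.card G ≤ Multiset.card S) : (1 : G) ∈ subProds S := by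
  obtain ⟨l, hl⟩ : ∃ l : List G, (l : Multiset G) = S := ⟨S.toList, S.coe_toList⟩
  have hlen : Fintype.card G ≤ l.length := by
    rwa [← hl, Multiset.coe_card] at h
  have hcard : Fintype.card G < Fintype.card (Fin (l.length + 1)) := by
    simp; omega
  obtain ⟨i, j, hij, hfe⟩ := Fintype.exists_ne_map_eq_of_card_lt
    (fun i : Fin (l.length + 1) => (l.take i).prod) hcard
  -- WLOG i < j
  wlog hlt : (i : ℕ) < (j : ℕ) generalizing i j
  · exact this j i hij.symm hfe.symm (by
      rcases lt_or_gt_of_ne (fun h => hij (Fin.ext h)) with h | h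
      · exact absurd h hlt
      · exact h)
  set s : List G := (l.drop i).take (j - i) with hs
  have htj : l.take j = l.take i ++ s := by
    rw [hs, ← List.take_add]
    congr 1
    omega
  have hsprod : s.prod = 1 := by
    have : (l.take i).prod * s.prod = (l.take i).prod * 1 := by
      rw [mul_one, ← List.prod_append, ← htj]
      exact hfe.symm
    exact mul_left_cancel this
  have hsne : s ≠ [] := by
    have hjl : (j : ℕ) ≤ l.length := by omega
    have : s.length = min ((j : ℕ) - i) (l.length - i) := by
      simp [hs]
    intro hnil
    rw [hnil] at this
    simp at this
    omega
  have hinfix : s <:+: l := ⟨l.take i, l.drop j, by rw [← htj, List.take_append_drop]⟩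
  refine ⟨(s : Multiset G), ?_, ?_, s, rfl, hsprod⟩
  · rw [← hl]
    exact Multiset.coe_le.mpr hinfix.sublist.subperm
  · simpa using hsne

theorem stmt_8 (p m r : ℕ) (G : Type*) [Group G] [Fintype G] (x y : G)
    (hp : p.Prime) (hm : 0 < m) (hr : 0 < r)
    (hcard : Fintype.card G = p * m)
    (hox : orderOf x = p) (hoy : orderOf y = m)
    (hrel : x⁻¹ * y * x = y ^ r)
    (hgen : Subgroup.closure ({x, y} : Set G) = ⊤)
    (hpmin : ∀ q : ℕ, q.Prime → q ∣ p * m → p ≤ q)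
    (hgcd : Nat.gcd (p * (r - 1)) m = 1) :
    (1 : G) ∉ subProds (Multiset.replicate (p - 1) x + Multiset.replicate (m - 1) y) ∧
      m + p - 2 ≤ dG G := by
  classical
  have hp2 := hp.two_le
  -- gcd p m = 1
  have hgpm : Nat.gcd p m = 1 := by
    have hdvd : Nat.gcd p m ∣ Nat.gcd (p * (r - 1)) m :=
      Nat.dvd_gcd ((Nat.gcd_dvd_left p m).trans (dvd_mul_right p (r - 1)))
        (Nat.gcd_dvd_right p m)
    rw [hgcd] at hdvd
    exact Nat.dvd_one.mp hdvd
  have hxy : x ≠ y := by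
    intro h
    rw [h, hoy] at hox
    rw [hox] at hgpm
    simp [Nat.gcd_self] at hgpm
    omega
  -- commutation: y^k * x = x * y^(r*k)
  have hyx1 : y * x = x * y ^ r := by
    have h := hrel
    calc y * x = x * (x⁻¹ * y * x) := by group
    _ = x * y ^ r := by rw [h]
  have hyx : ∀ k : ℕ, y ^ k * x = x * y ^ (r * k) := by
    intro k
    induction k with
    | zero => simp
    | succ k ih =>
      calc y ^ (k + 1) * x = y * (y ^ k * x) := by rw [pow_succ', mul_assoc]
      _ = y * (x * y ^ (r * k)) := by rw [ih]
      _ = (y * x) * y ^ (r * k) := by rw [mul_assoc]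
      _ = x * y ^ r * y ^ (r * k) := by rw [hyx1]
      _ = x * y ^ (r * (k + 1)) := by rw [mul_assoc, ← pow_add]; ring_nf
  have hkey : ∀ a k : ℕ, y ^ k * x ^ a = x ^ a * y ^ (k * r ^ a) := by
    intro a
    induction a with
    | zero => intro k; simp
    | succ a ih =>
      intro k
      calc y ^ k * x ^ (a + 1) = (y ^ k * x) * x ^ a := by rw [pow_succ', ← mul_assoc]
      _ = x * (y ^ (r * k) * x ^ a) := by rw [hyx, mul_assoc]
      _ = x * (x ^ a * y ^ (r * k * r ^ a)) := by rw [ih]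
      _ = x ^ (a + 1) * y ^ (k * r ^ (a + 1)) := by
          rw [← mul_assoc, ← pow_succ']
          congr 1
          ring
  -- normal form of products of x's and y's
  have hnf : ∀ l : List G, (∀ g ∈ l, g = x ∨ g = y) →
      ∃ c : ℕ, l.prod = x ^ l.count x * y ^ c := by
    intro l
    induction l with
    | nil => intro _; exact ⟨0, by simp⟩
    | cons g l ih =>
      intro hmem
      obtain ⟨c, hc⟩ := ih fun g hg => hmem g (List.mem_cons_of_mem _ hg)
      rcases hmem g List.mem_cons_self with hg | hg
      · rw [hg]
        refine ⟨c, ?_⟩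
        rw [List.prod_cons, hc, ← mul_assoc, ← pow_succ', List.count_cons_self]
      · rw [hg]
        refine ⟨r ^ l.count x + c, ?_⟩
        rw [List.prod_cons, hc, List.count_cons_of_ne hxy.symm]
        calc y * (x ^ l.count x * y ^ c) = (y ^ 1 * x ^ l.count x) * y ^ c := by
              rw [pow_one, mul_assoc]
        _ = (x ^ l.count x * y ^ (1 * r ^ l.count x)) * y ^ c := by rw [hkey]
        _ = x ^ l.count x * y ^ (r ^ l.count x + c) := by
              rw [one_mul, mul_assoc, ← pow_add]
  -- counting lemma
  have hcnt : ∀ l : List G, (∀ g ∈ l, g = x ∨ g = y) →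
      l.count x + l.count y = l.length := by
    intro l
    induction l with
    | nil => intro _; simp
    | cons g l ih =>
      intro hmem
      have h := ih fun g hg => hmem g (List.mem_cons_of_mem _ hg)
      rcases hmem g List.mem_cons_self with hg | hg <;> rw [hg]
      · rw [List.count_cons_self, List.count_cons_of_ne hxy, List.length_cons]
        omega
      · rw [List.count_cons_self, List.count_cons_of_ne hxy.symm, List.length_cons]
        omega
        -- Part 1
  have part1 : (1 : G) ∉ subProds
      (Multiset.replicate (p - 1) x + Multiset.replicate (m - 1) y) := by
    rintro ⟨T, hTle, hT0, l, hlT, hlprod⟩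
    have hel : ∀ g ∈ l, g = x ∨ g = y := by
      intro g hg
      have hgT : g ∈ T := by rw [← hlT]; exact hg
      have := Multiset.mem_of_le hTle hgT
      rw [Multiset.mem_add] at this
      rcases this with h | h
      · exact Or.inl (Multiset.eq_of_mem_replicate h)
      · exact Or.inr (Multiset.eq_of_mem_replicate h)
    have hax : l.count x ≤ p - 1 := by
      have h := Multiset.count_le_of_le x hTle
      rw [← hlT, Multiset.coe_count, Multiset.count_add, Multiset.count_replicate,
        Multiset.count_replicate, if_pos rfl, if_neg hxy.symm] at h
      omega
    have hby : l.count y ≤ m - 1 := by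
      have h := Multiset.count_le_of_le y hTle
      rw [← hlT, Multiset.coe_count, Multiset.count_add, Multiset.count_replicate,
        Multiset.count_replicate, if_pos rfl, if_neg hxy] at h
      omega
    have hlne : l ≠ [] := by
      intro h
      apply hT0
      rw [← hlT, h]
      rfl
    have hlpos : 0 < l.length := List.length_pos_iff.mpr hlne
    obtain ⟨c, hc⟩ := hnf l hel
    rw [hc] at hlprod
    -- x ^ (count x) = (y^c)⁻¹
    have heq : x ^ l.count x = (y ^ c)⁻¹ := eq_inv_of_mul_eq_one_left hlprod
    have hpow_p : (x ^ l.count x) ^ p = 1 := by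
      rw [← pow_mul, mul_comm, pow_mul, ← hox, pow_orderOf_eq_one, one_pow]
    have hpow_m : (x ^ l.count x) ^ m = 1 := by
      have hym : (y ^ c) ^ m = 1 := by
        rw [← pow_mul, mul_comm, pow_mul, ← hoy, pow_orderOf_eq_one, one_pow]
      rw [heq, inv_pow, hym, inv_one]
    have hord1 : orderOf (x ^ l.count x) = 1 := by
      have h1 := orderOf_dvd_of_pow_eq_one hpow_p
      have h2 := orderOf_dvd_of_pow_eq_one hpow_m
      have := Nat.dvd_gcd h1 h2
      rw [hgpm] at this
      exact Nat.dvd_one.mp this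
    have hxa1 : x ^ l.count x = 1 := orderOf_eq_one_iff.mp hord1
    have ha0 : l.count x = 0 := by
      have hdvd : p ∣ l.count x := hox ▸ orderOf_dvd_of_pow_eq_one hxa1
      exact Nat.eq_zero_of_dvd_of_lt hdvd (by omega)
    have hxnot : x ∉ l := List.count_eq_zero.mp ha0
    have hall : ∀ g ∈ l, g = y := by
      intro g hg
      rcases hel g hg with h | h
      · exact absurd (h ▸ hg) hxnot
      · exact h
    have hprod_y : l.prod = y ^ l.length := List.prod_eq_pow_card l y hall
    have hlen : l.length = l.count y := by
      have := hcnt l hel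
      omega
    rw [hprod_y] at hc
    rw [ha0, pow_zero, one_mul] at hc
    have hy1 : y ^ l.length = 1 := by
      have := hlprod
      rw [ha0, pow_zero, one_mul] at this
      rw [hc]
      exact this
    have hmdvd : m ∣ l.length := hoy ▸ orderOf_dvd_of_pow_eq_one hy1
    have : l.length = 0 := Nat.eq_zero_of_dvd_of_lt hmdvd (by omega)
    omega
  refine ⟨part1, ?_⟩
  -- Part 2
  have hbdd : BddAbove {n | ∃ S : Multiset G, Multiset.card S = n ∧ (1 : G) ∉ subProds S} := by
    refine ⟨Fintype.card G, ?_⟩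
    rintro n ⟨S, hS, hnS⟩
    by_contra hlt
    push_neg at hlt
    exact hnS (aux_long_seq S (by omega))
  have hmem : m + p - 2 ∈ {n | ∃ S : Multiset G, Multiset.card S = n ∧ (1 : G) ∉ subProds S} := by
    refine ⟨Multiset.replicate (p - 1) x + Multiset.replicate (m - 1) y, ?_, part1⟩
    rw [Multiset.card_add, Multiset.card_replicate, Multiset.card_replicate]
    omega
  exact le_csSup hbdd hmem
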